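/- arXiv:2004.11166 — 2 statements merged into one kernel-verified Lean document; each statement's English description precedes it below -/
import Mathlib

section
/- Let P be a GMMN instance, let l = (s_l, t_l) ∈ P be a regular pair, and let p and q be vertices of the Hanan grid H(P) lying in B(l) with p ≤ q. Then every Manhattan path π_v ∈ Π_P(p,q) is completely included in some Manhattan path π_l ∈ Π_P(l), i.e., there exists π_l ∈ Π_P(l) having π_v as a subgraph. (This is the key step in the proof of Lemma 3.1(1).) -/
noncomputable section
open scoped Classical

/-- A point in the Euclidean plane. -/
abbrev Point : Type := ℝ × ℝ

/-- The Manhattan distance `d(p, q)`. -/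
def manh (p q : Point) : ℝ := |p.1 - q.1| + |p.2 - q.2|

/-- The Euclidean length `‖pq‖` of the segment between `p` and `q`. -/
def euclen (p q : Point) : ℝ := Real.sqrt ((p.1 - q.1) ^ 2 + (p.2 - q.2) ^ 2)

/-- The segment `pq` is axis-aligned. -/
def axisAligned (p q : Point) : Prop := p.1 = q.1 ∨ p.2 = q.2

/-- `z` lies in the bounding box `B(a, b)` (componentwise between `a ⊓ b` and `a ⊔ b`). -/
def inBox (a b z : Point) : Prop := a ⊓ b ≤ z ∧ z ≤ a ⊔ b

lemma euclen_comm (p q : Point) : euclen p q = euclen q p := by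
  unfold euclen; ring_nf

/-- Length of an (unordered) edge. -/
def sym2Len : Sym2 Point → ℝ := Sym2.lift ⟨euclen, euclen_comm⟩

/-- The length of a network, given by its (finite) edge set. -/
def netLength (N : Finset (Sym2 Point)) : ℝ := ∑ e ∈ N, sym2Len e

/-- A (simple) path in the plane, given by its sequence of (distinct) vertices. -/
structure GPath where
  k : ℕ
  pts : Fin (k + 1) → Point
  inj : Function.Injective pts

/-- The `i`-th edge of a path. -/
def GPath.edge (π : GPath) (i : Fin π.k) : Sym2 Point :=
  s(π.pts i.castSucc, π.pts i.succ)

/-- The edge set of a path. -/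
def GPath.edges (π : GPath) : Finset (Sym2 Point) :=
  Finset.image π.edge Finset.univ

/-- The total (Euclidean) length of a path. -/
def GPath.length (π : GPath) : ℝ :=
  ∑ i : Fin π.k, euclen (π.pts i.castSucc) (π.pts i.succ)

/-- `π` is a Manhattan path (M-path) for the pair `(s, t)`: an `s`–`t` path all of whose
edges are axis-aligned and whose total length equals the Manhattan distance `d(s, t)`. -/
def IsMPath (s t : Point) (π : GPath) : Prop :=
  π.pts 0 = s ∧ π.pts (Fin.last π.k) = t ∧
  (∀ i : Fin π.k, axisAligned (π.pts i.castSucc) (π.pts i.succ)) ∧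
  π.length = manh s t

/-- A GMMN instance: a finite set of pairs of points. -/
abbrev Inst : Type := Finset (Point × Point)

/-- The vertex set of the Hanan grid `H(P)`. -/
def hananV (P : Inst) : Finset Point :=
  ((P.image fun v => v.1.1) ∪ (P.image fun v => v.2.1)) ×ˢ
  ((P.image fun v => v.1.2) ∪ (P.image fun v => v.2.2))

/-- `{p, q}` is an edge of the Hanan grid `H(P)`: an axis-aligned segment between two distinct
grid vertices containing no third grid vertex. -/
def IsHananEdge (P : Inst) (p q : Point) : Prop :=
  p ∈ hananV P ∧ q ∈ hananV P ∧ p ≠ q ∧ axisAligned p q ∧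
  ∀ z ∈ hananV P, inBox p q z → z = p ∨ z = q

/-- All edges of the path `π` are edges of the Hanan grid `H(P)`. -/
def OnGrid (P : Inst) (π : GPath) : Prop :=
  ∀ i : Fin π.k, IsHananEdge P (π.pts i.castSucc) (π.pts i.succ)

/-- `π ∈ Π_P(u)`: an M-path for the pair `u` that is a subgraph of the Hanan grid `H(P)`. -/
def InPi (P : Inst) (u : Point × Point) (π : GPath) : Prop :=
  IsMPath u.1 u.2 π ∧ OnGrid P π

/-- The network `∪_{v ∈ P} π_v` determined by a choice of M-paths. -/
def netOf (P : Inst) (f : Point × Point → GPath) : Finset (Sym2 Point) :=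
  P.biUnion fun v => (f v).edges

/-- `f` gives a feasible solution in `Feas(P)`: an M-path on the Hanan grid for each pair. -/
def IsFeasChoice (P : Inst) (f : Point × Point → GPath) : Prop :=
  ∀ v ∈ P, InPi P v (f v)

/-- `f` gives an optimal solution in `Opt(P)`. -/
def IsOptChoice (P : Inst) (f : Point × Point → GPath) : Prop :=
  IsFeasChoice P f ∧
  ∀ g : Point × Point → GPath, IsFeasChoice P g →
    netLength (netOf P f) ≤ netLength (netOf P g)

/-- Adjacency in the intersection graph `IG[P]`: `u ≠ v` and the induced subgrids
`H(P, u)` and `H(P, v)` share an edge. -/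
def IGAdj (P : Inst) (u v : Point × Point) : Prop :=
  u ≠ v ∧ ∃ p q : Point, IsHananEdge P p q ∧
    inBox u.1 u.2 p ∧ inBox u.1 u.2 q ∧ inBox v.1 v.2 p ∧ inBox v.1 v.2 q

/-- The total length `‖π₁ ∩ π₂‖` of the segments shared by two paths. -/
def sharedLen (π₁ π₂ : GPath) : ℝ := netLength (π₁.edges ∩ π₂.edges)

/-- A pair `(p, q)` with `p_x ≤ q_x` is regular if `p_y ≤ q_y`. -/
def Regular (u : Point × Point) : Prop := u.1.1 ≤ u.2.1 ∧ u.1.2 ≤ u.2.2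

/-- A pair `(p, q)` with `p_x ≤ q_x` is flipped if `p_y ≥ q_y`. -/
def Flipped (u : Point × Point) : Prop := u.1.1 ≤ u.2.1 ∧ u.2.2 ≤ u.1.2

/-- The intersection graph `IG[P]` as a simple graph on the pairs of `P`. -/
def IG (P : Inst) : SimpleGraph {v : Point × Point // v ∈ P} where
  Adj u v := IGAdj P u.1 v.1
  symm := ⟨by
    rintro u v ⟨hne, p, q, he, h1, h2, h3, h4⟩
    exact ⟨hne.symm, p, q, he, h3, h4, h1, h2⟩⟩
  loopless := ⟨fun u h => h.1 rfl⟩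


namespace RegExt

def Rel (P : Inst) (z w : Point) : Prop := IsHananEdge P z w ∧ z ≤ w

lemma manh_eq_of_le {u v : Point} (h : u ≤ v) : manh u v = (v.1 - u.1) + (v.2 - u.2) := by
  rw [Prod.le_def] at h
  unfold manh
  rw [abs_sub_comm u.1, abs_sub_comm u.2, abs_of_nonneg (by linarith [h.1]),
    abs_of_nonneg (by linarith [h.2])]

lemma euclen_eq_manh {u v : Point} (h : axisAligned u v) : euclen u v = manh u v := by
  unfold euclen manh
  rcases h with h | h
  · simp [h, Real.sqrt_sq_eq_abs]
  · simp [h, Real.sqrt_sq_eq_abs]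

def ofList (L : List Point) (hne : L ≠ []) (hnd : L.Nodup) : GPath where
  k := L.length - 1
  pts i := L.get ⟨i.val, by
    have h := i.isLt
    have : 0 < L.length := List.length_pos_iff.2 hne
    omega⟩
  inj := by
    intro i j hij
    have h2 := (hnd.get_inj_iff).1 hij
    apply Fin.ext
    have h3 := congrArg Fin.val h2
    simpa using h3

lemma gpath_tele (π : GPath) (f : Point → ℝ) :
    ∑ i : Fin π.k, (f (π.pts i.succ) - f (π.pts i.castSucc)) =
      f (π.pts (Fin.last π.k)) - f (π.pts 0) := by
  set g : ℕ → ℝ := fun n => f (π.pts ⟨min n π.k, by omega⟩) with hg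
  have h1 : ∀ i : Fin π.k, f (π.pts i.succ) - f (π.pts i.castSucc) = g (i.val + 1) - g i.val := by
    intro i
    have hi := i.isLt
    have e1 : i.succ = (⟨min (i.val + 1) π.k, by omega⟩ : Fin (π.k+1)) :=
      Fin.ext (by simp only [Fin.val_succ]; omega)
    have e2 : i.castSucc = (⟨min i.val π.k, by omega⟩ : Fin (π.k+1)) :=
      Fin.ext (by simp only [Fin.coe_castSucc]; omega)
    rw [e1, e2]
  calc ∑ i : Fin π.k, (f (π.pts i.succ) - f (π.pts i.castSucc))
      = ∑ i : Fin π.k, (g (i.val + 1) - g i.val) := Finset.sum_congr rfl (fun i _ => h1 i)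
    _ = ∑ i ∈ Finset.range π.k, (g (i+1) - g i) := Fin.sum_univ_eq_sum_range (fun n => g (n+1) - g n) π.k
    _ = g π.k - g 0 := Finset.sum_range_sub g π.k
    _ = f (π.pts (Fin.last π.k)) - f (π.pts 0) := by
        have e3 : (⟨min π.k π.k, by omega⟩ : Fin (π.k+1)) = Fin.last π.k := Fin.ext (by simp)
        have e4 : (⟨min 0 π.k, by omega⟩ : Fin (π.k+1)) = 0 := Fin.ext (by simp)
        rw [hg]
        simp only [e3, e4]

lemma mpath_steps {s t : Point} {π : GPath} (h : IsMPath s t π) (hst : s ≤ t)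
    (i : Fin π.k) : π.pts i.castSucc ≤ π.pts i.succ := by
  obtain ⟨h0, hlast, hax, hlen⟩ := h
  have hx := gpath_tele π (fun z => z.1)
  have hy := gpath_tele π (fun z => z.2)
  rw [h0, hlast] at hx hy
  have hlen' : ∑ j : Fin π.k, (|(π.pts j.succ).1 - (π.pts j.castSucc).1| +
      |(π.pts j.succ).2 - (π.pts j.castSucc).2|) = (t.1 - s.1) + (t.2 - s.2) := by
    rw [← manh_eq_of_le hst, ← hlen]
    unfold GPath.length
    refine Finset.sum_congr rfl (fun j _ => ?_)
    rw [euclen_eq_manh (hax j)]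
    unfold manh
    rw [abs_sub_comm ((π.pts j.castSucc)).1, abs_sub_comm ((π.pts j.castSucc)).2]
  have hzero : ∑ j : Fin π.k,
      ((|(π.pts j.succ).1 - (π.pts j.castSucc).1| - ((π.pts j.succ).1 - (π.pts j.castSucc).1)) +
       (|(π.pts j.succ).2 - (π.pts j.castSucc).2| - ((π.pts j.succ).2 - (π.pts j.castSucc).2))) = 0 := by
    have e : ∀ j : Fin π.k,
        ((|(π.pts j.succ).1 - (π.pts j.castSucc).1| - ((π.pts j.succ).1 - (π.pts j.castSucc).1)) +
         (|(π.pts j.succ).2 - (π.pts j.castSucc).2| - ((π.pts j.succ).2 - (π.pts j.castSucc).2))) =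
        (|(π.pts j.succ).1 - (π.pts j.castSucc).1| + |(π.pts j.succ).2 - (π.pts j.castSucc).2|)
        - (((π.pts j.succ).1 - (π.pts j.castSucc).1) + ((π.pts j.succ).2 - (π.pts j.castSucc).2)) := by
      intro j; ring
    rw [Finset.sum_congr rfl (fun j _ => e j), Finset.sum_sub_distrib, hlen',
      Finset.sum_add_distrib, hx, hy]
    ring
  have hnn : ∀ j ∈ (Finset.univ : Finset (Fin π.k)), (0:ℝ) ≤
      ((|(π.pts j.succ).1 - (π.pts j.castSucc).1| - ((π.pts j.succ).1 - (π.pts j.castSucc).1)) +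
       (|(π.pts j.succ).2 - (π.pts j.castSucc).2| - ((π.pts j.succ).2 - (π.pts j.castSucc).2))) := by
    intro j _
    have := le_abs_self ((π.pts j.succ).1 - (π.pts j.castSucc).1)
    have := le_abs_self ((π.pts j.succ).2 - (π.pts j.castSucc).2)
    linarith
  have hi := (Finset.sum_eq_zero_iff_of_nonneg hnn).1 hzero i (Finset.mem_univ i)
  have a1 := le_abs_self ((π.pts i.succ).1 - (π.pts i.castSucc).1)
  have a2 := le_abs_self ((π.pts i.succ).2 - (π.pts i.castSucc).2)
  have b1 := abs_nonneg ((π.pts i.succ).1 - (π.pts i.castSucc).1)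
  have b2 := abs_nonneg ((π.pts i.succ).2 - (π.pts i.castSucc).2)
  rw [Prod.le_def]
  constructor <;> linarith

end RegExt
namespace RegExt

lemma mpath_mono {s t : Point} {π : GPath} (h : IsMPath s t π) (hst : s ≤ t) :
    ∀ i j : Fin (π.k + 1), i ≤ j → π.pts i ≤ π.pts j := by
  set F : ℕ → Point := fun n => π.pts ⟨min n π.k, by omega⟩ with hF
  have hmono : Monotone F := by
    apply monotone_nat_of_le_succ
    intro n
    by_cases hn : n < π.k
    · have e1 : (⟨min n π.k, by omega⟩ : Fin (π.k+1)) = (⟨n, hn⟩ : Fin π.k).castSucc :=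
        Fin.ext (by simp only [Fin.coe_castSucc]; omega)
      have e2 : (⟨min (n+1) π.k, by omega⟩ : Fin (π.k+1)) = (⟨n, hn⟩ : Fin π.k).succ :=
        Fin.ext (by simp only [Fin.val_succ]; omega)
      show π.pts ⟨min n π.k, by omega⟩ ≤ π.pts ⟨min (n+1) π.k, by omega⟩
      rw [e1, e2]
      exact mpath_steps h hst ⟨n, hn⟩
    · have e : min n π.k = min (n+1) π.k := by omega
      show π.pts ⟨min n π.k, by omega⟩ ≤ π.pts ⟨min (n+1) π.k, by omega⟩
      simp only [e]
      exact le_refl _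
  intro i j hij
  have ei : π.pts i = F i.val := by
    have : (⟨min i.val π.k, by omega⟩ : Fin (π.k+1)) = i := Fin.ext (by have := i.isLt; simp; omega)
    show π.pts i = π.pts ⟨min i.val π.k, by omega⟩
    rw [this]
  have ej : π.pts j = F j.val := by
    have : (⟨min j.val π.k, by omega⟩ : Fin (π.k+1)) = j := Fin.ext (by have := j.isLt; simp; omega)
    show π.pts j = π.pts ⟨min j.val π.k, by omega⟩
    rw [this]
  rw [ei, ej]
  exact hmono hij

lemma mpath_box {s t : Point} {π : GPath} (h : IsMPath s t π) (hst : s ≤ t)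
    (i : Fin (π.k + 1)) : s ≤ π.pts i ∧ π.pts i ≤ t := by
  constructor
  · have := mpath_mono h hst 0 i (Fin.zero_le i)
    rwa [h.1] at this
  · have := mpath_mono h hst i (Fin.last π.k) (Fin.le_last i)
    rwa [h.2.1] at this

lemma inPi_ofList {P : Inst} {L : List Point} (hne : L ≠ []) (hnd : L.Nodup)
    (hch : List.IsChain (Rel P) L) :
    InPi P (L.head hne, L.getLast hne) (ofList L hne hnd) := by
  set π := ofList L hne hnd with hπ
  have hLpos : 0 < L.length := List.length_pos_iff.2 hne
  have hk : π.k = L.length - 1 := rfl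
  have hrel : ∀ i : Fin π.k, Rel P (π.pts i.castSucc) (π.pts i.succ) := by
    intro i
    have hi : (i : ℕ) < L.length - 1 := i.isLt
    have := List.isChain_iff_getElem.1 hch i.val (by omega)
    exact this
  have h0 : π.pts 0 = L.head hne := by
    rw [List.head_eq_getElem]
    show L.get ⟨(0 : Fin (π.k+1)).val, _⟩ = _
    simp
  have hlast : π.pts (Fin.last π.k) = L.getLast hne := by
    rw [List.getLast_eq_getElem]
    show L.get ⟨(Fin.last π.k).val, _⟩ = _
    simp [Fin.last, hk]
  have hax : ∀ i : Fin π.k, axisAligned (π.pts i.castSucc) (π.pts i.succ) :=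
    fun i => (hrel i).1.2.2.2.1
  have hmono : ∀ i : Fin π.k, π.pts i.castSucc ≤ π.pts i.succ := fun i => (hrel i).2
  have hx := gpath_tele π (fun z => z.1)
  have hy := gpath_tele π (fun z => z.2)
  have hle : π.pts 0 ≤ π.pts (Fin.last π.k) := by
    have h1 : (0:ℝ) ≤ (π.pts (Fin.last π.k)).1 - (π.pts 0).1 := by
      rw [← hx]
      apply Finset.sum_nonneg
      intro i _
      have := hmono i
      rw [Prod.le_def] at this
      linarith [this.1]
    have h2 : (0:ℝ) ≤ (π.pts (Fin.last π.k)).2 - (π.pts 0).2 := by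
      rw [← hy]
      apply Finset.sum_nonneg
      intro i _
      have := hmono i
      rw [Prod.le_def] at this
      linarith [this.2]
    rw [Prod.le_def]
    constructor <;> linarith
  have hlen : π.length = manh (π.pts 0) (π.pts (Fin.last π.k)) := by
    unfold GPath.length
    rw [manh_eq_of_le hle, ← hx, ← hy, ← Finset.sum_add_distrib]
    refine Finset.sum_congr rfl fun i _ => ?_
    rw [euclen_eq_manh (hax i), manh_eq_of_le (hmono i)]
  refine ⟨⟨h0, hlast, hax, ?_⟩, fun i => (hrel i).1⟩
  rw [hlen, h0, hlast]

end RegExt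
namespace RegExt

def Xs (P : Inst) : Finset ℝ := (P.image fun v => v.1.1) ∪ (P.image fun v => v.2.1)
def Ys (P : Inst) : Finset ℝ := (P.image fun v => v.1.2) ∪ (P.image fun v => v.2.2)

lemma mem_hananV {P : Inst} {z : Point} : z ∈ hananV P ↔ z.1 ∈ Xs P ∧ z.2 ∈ Ys P := by
  rw [hananV, Finset.mem_product]
  rfl

def slist (s : Finset ℝ) (lo hi : ℝ) : List ℝ :=
  (s.filter fun x => lo ≤ x ∧ x ≤ hi).sort (· ≤ ·)

lemma mem_slist {s : Finset ℝ} {lo hi x : ℝ} :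
    x ∈ slist s lo hi ↔ x ∈ s ∧ lo ≤ x ∧ x ≤ hi := by
  rw [slist, Finset.mem_sort, Finset.mem_filter]

lemma slist_sorted (s : Finset ℝ) (lo hi : ℝ) : (slist s lo hi).Pairwise (· < ·) :=
  (Finset.sortedLT_sort _).pairwise

lemma slist_nodup (s : Finset ℝ) (lo hi : ℝ) : (slist s lo hi).Nodup :=
  (slist_sorted s lo hi).nodup

lemma slist_ne {s : Finset ℝ} {lo hi : ℝ} (hlo : lo ∈ s) (h : lo ≤ hi) :
    slist s lo hi ≠ [] :=
  List.ne_nil_of_mem (mem_slist.2 ⟨hlo, le_refl _, h⟩)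

lemma sorted_head_min {l : List ℝ} (hs : l.Pairwise (· < ·)) (hne : l ≠ []) {x : ℝ}
    (hx : x ∈ l) : l.head hne ≤ x := by
  obtain ⟨n, hn, rfl⟩ := List.mem_iff_getElem.1 hx
  rw [List.head_eq_getElem]
  rcases Nat.eq_zero_or_pos n with h0 | h0
  · subst h0; exact le_refl _
  · exact le_of_lt (hs.sortedLT.strictMono_get (show (⟨0, by omega⟩ : Fin l.length) < ⟨n, hn⟩ by
      simp [Fin.lt_def]; omega))

lemma sorted_last_max {l : List ℝ} (hs : l.Pairwise (· < ·)) (hne : l ≠ []) {x : ℝ}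
    (hx : x ∈ l) : x ≤ l.getLast hne := by
  obtain ⟨n, hn, rfl⟩ := List.mem_iff_getElem.1 hx
  rw [List.getLast_eq_getElem]
  rcases eq_or_lt_of_le (show n ≤ l.length - 1 by omega) with h0 | h0
  · subst h0; exact le_refl _
  · exact le_of_lt (hs.sortedLT.strictMono_get (show (⟨n, hn⟩ : Fin l.length) < ⟨l.length - 1, by omega⟩ by
      simp [Fin.lt_def]; omega))

lemma slist_head {s : Finset ℝ} {lo hi : ℝ} (hlo : lo ∈ s) (h : lo ≤ hi) :
    (slist s lo hi).head (slist_ne hlo h) = lo := by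
  have h1 : lo ∈ slist s lo hi := mem_slist.2 ⟨hlo, le_refl _, h⟩
  have h2 := sorted_head_min (slist_sorted s lo hi) (slist_ne hlo h) h1
  have h3 : (slist s lo hi).head (slist_ne hlo h) ∈ slist s lo hi := List.head_mem _
  exact le_antisymm h2 (mem_slist.1 h3).2.1

lemma slist_last {s : Finset ℝ} {lo hi : ℝ} (hlo : lo ∈ s) (hhi : hi ∈ s) (h : lo ≤ hi) :
    (slist s lo hi).getLast (slist_ne hlo h) = hi := by
  have h1 : hi ∈ slist s lo hi := mem_slist.2 ⟨hhi, h, le_refl _⟩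
  have h2 := sorted_last_max (slist_sorted s lo hi) (slist_ne hlo h) h1
  have h3 : (slist s lo hi).getLast (slist_ne hlo h) ∈ slist s lo hi := List.getLast_mem _
  exact le_antisymm (mem_slist.1 h3).2.2 h2

/-- Nothing of `s ∩ [lo,hi]` lies strictly between consecutive entries. -/
lemma slist_between {s : Finset ℝ} {lo hi : ℝ} {i : ℕ}
    (hi1 : i + 1 < (slist s lo hi).length) {x : ℝ} (hx : x ∈ slist s lo hi)
    (h1 : (slist s lo hi)[i] ≤ x) (h2 : x ≤ (slist s lo hi)[i+1]) :
    x = (slist s lo hi)[i] ∨ x = (slist s lo hi)[i+1] := by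
  obtain ⟨n, hn, rfl⟩ := List.mem_iff_getElem.1 hx
  have hs := slist_sorted s lo hi
  have hmono := hs.sortedLT.strictMono_get.monotone
  rcases le_or_gt n i with hni | hni
  · left
    have : (slist s lo hi)[n] ≤ (slist s lo hi)[i] :=
      hmono (show (⟨n, hn⟩ : Fin _) ≤ ⟨i, by omega⟩ by simp [Fin.le_def]; omega)
    linarith
  · right
    have : (slist s lo hi)[i+1] ≤ (slist s lo hi)[n] :=
      hmono (show (⟨i+1, hi1⟩ : Fin _) ≤ ⟨n, hn⟩ by simp [Fin.le_def]; omega)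
    linarith

end RegExt
namespace RegExt

lemma inBox_le {u v z : Point} (huv : u ≤ v) (h : inBox u v z) : u ≤ z ∧ z ≤ v := by
  obtain ⟨h1, h2⟩ := h
  rw [inf_eq_left.2 huv] at h1
  rw [sup_eq_right.2 huv] at h2
  exact ⟨h1, h2⟩

lemma horiz_edge (P : Inst) {y : ℝ} (hy : y ∈ Ys P) {lo hi : ℝ} {i : ℕ}
    (hi1 : i + 1 < (slist (Xs P) lo hi).length) :
    Rel P ((slist (Xs P) lo hi)[i], y) (((slist (Xs P) lo hi))[i+1], y) := by
  set xs := slist (Xs P) lo hi with hxs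
  have hlt : xs[i] < xs[i+1] :=
    (slist_sorted (Xs P) lo hi).sortedLT.strictMono_get (show (⟨i, by omega⟩ : Fin xs.length) < ⟨i+1, hi1⟩ by
      simp [Fin.lt_def])
  have hm1 := mem_slist.1 (xs.getElem_mem (show i < xs.length by omega))
  have hm2 := mem_slist.1 (xs.getElem_mem hi1)
  refine ⟨⟨mem_hananV.2 ⟨hm1.1, hy⟩, mem_hananV.2 ⟨hm2.1, hy⟩, ?_, Or.inr rfl, ?_⟩, ?_⟩
  · intro h
    exact absurd (congrArg Prod.fst h) (ne_of_lt hlt)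
  · intro z hz hbox
    have hle : ((xs[i], y) : Point) ≤ (xs[i+1], y) := Prod.le_def.2 ⟨le_of_lt hlt, le_refl _⟩
    obtain ⟨hz1, hz2⟩ := inBox_le hle hbox
    rw [Prod.le_def] at hz1 hz2
    have hzy : z.2 = y := le_antisymm hz2.2 hz1.2
    have hzX : z.1 ∈ Xs P := (mem_hananV.1 hz).1
    have hzmem : z.1 ∈ xs := mem_slist.2 ⟨hzX, le_trans hm1.2.1 hz1.1, le_trans hz2.1 hm2.2.2⟩
    rcases slist_between hi1 hzmem hz1.1 hz2.1 with h | h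
    · left; exact Prod.ext h hzy
    · right; exact Prod.ext h hzy
  · exact Prod.le_def.2 ⟨le_of_lt hlt, le_refl _⟩

lemma vert_edge (P : Inst) {x : ℝ} (hx : x ∈ Xs P) {lo hi : ℝ} {i : ℕ}
    (hi1 : i + 1 < (slist (Ys P) lo hi).length) :
    Rel P (x, (slist (Ys P) lo hi)[i]) (x, ((slist (Ys P) lo hi))[i+1]) := by
  set ys := slist (Ys P) lo hi with hys
  have hlt : ys[i] < ys[i+1] :=
    (slist_sorted (Ys P) lo hi).sortedLT.strictMono_get (show (⟨i, by omega⟩ : Fin ys.length) < ⟨i+1, hi1⟩ by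
      simp [Fin.lt_def])
  have hm1 := mem_slist.1 (ys.getElem_mem (show i < ys.length by omega))
  have hm2 := mem_slist.1 (ys.getElem_mem hi1)
  refine ⟨⟨mem_hananV.2 ⟨hx, hm1.1⟩, mem_hananV.2 ⟨hx, hm2.1⟩, ?_, Or.inl rfl, ?_⟩, ?_⟩
  · intro h
    exact absurd (congrArg Prod.snd h) (ne_of_lt hlt)
  · intro z hz hbox
    have hle : ((x, ys[i]) : Point) ≤ (x, ys[i+1]) := Prod.le_def.2 ⟨le_refl _, le_of_lt hlt⟩
    obtain ⟨hz1, hz2⟩ := inBox_le hle hbox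
    rw [Prod.le_def] at hz1 hz2
    have hzx : z.1 = x := le_antisymm hz2.1 hz1.1
    have hzY : z.2 ∈ Ys P := (mem_hananV.1 hz).2
    have hzmem : z.2 ∈ ys := mem_slist.2 ⟨hzY, le_trans hm1.2.1 hz1.2, le_trans hz2.2 hm2.2.2⟩
    rcases slist_between hi1 hzmem hz1.2 hz2.2 with h | h
    · left; exact Prod.ext hzx h
    · right; exact Prod.ext hzx h
  · exact Prod.le_def.2 ⟨le_refl _, le_of_lt hlt⟩

def stair (P : Inst) (a b : Point) : List Point :=
  (slist (Xs P) a.1 b.1).map (fun x => (x, a.2)) ++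
  ((slist (Ys P) a.2 b.2).tail).map (fun y => (b.1, y))

end RegExt
namespace RegExt

lemma getElem_idx {α : Type*} {l : List α} {i j : ℕ} (h : i = j) (hi : i < l.length) :
    l[i] = l[j]'(h ▸ hi) := by subst h; rfl

lemma xs_ne {P : Inst} {a b : Point} (hab : a ≤ b) (ha : a ∈ hananV P) :
    slist (Xs P) a.1 b.1 ≠ [] :=
  slist_ne (mem_hananV.1 ha).1 (Prod.le_def.1 hab).1

lemma ys_ne {P : Inst} {a b : Point} (hab : a ≤ b) (ha : a ∈ hananV P) :
    slist (Ys P) a.2 b.2 ≠ [] :=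
  slist_ne (mem_hananV.1 ha).2 (Prod.le_def.1 hab).2

lemma stair_ne {P : Inst} {a b : Point} (hab : a ≤ b) (ha : a ∈ hananV P) :
    stair P a b ≠ [] := by
  intro h
  rcases List.append_eq_nil_iff.1 h with ⟨h1, -⟩
  exact xs_ne hab ha (List.map_eq_nil_iff.1 h1)

lemma stair_head {P : Inst} {a b : Point} (hab : a ≤ b) (ha : a ∈ hananV P) :
    (stair P a b).head (stair_ne hab ha) = a := by
  have hxne : (slist (Xs P) a.1 b.1).map (fun x => ((x, a.2) : Point)) ≠ [] := by
    simp [List.map_eq_nil_iff, xs_ne hab ha]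
  simp only [stair]
  rw [List.head_append, dif_neg (by simp only [List.isEmpty_iff]; exact hxne), List.head_map,
    slist_head (mem_hananV.1 ha).1 (Prod.le_def.1 hab).1]

lemma tail_getLast {α : Type*} : ∀ {l : List α} (hne : l ≠ []) (ht : l.tail ≠ []),
    l.tail.getLast ht = l.getLast hne
  | _ :: _, _, ht => (List.getLast_cons ht).symm

lemma stair_last {P : Inst} {a b : Point} (hab : a ≤ b) (ha : a ∈ hananV P)
    (hb : b ∈ hananV P) : (stair P a b).getLast (stair_ne hab ha) = b := by
  by_cases hyt : (slist (Ys P) a.2 b.2).tail = []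
  · have hy2 : a.2 = b.2 := by
      have hbm : b.2 ∈ slist (Ys P) a.2 b.2 :=
        mem_slist.2 ⟨(mem_hananV.1 hb).2, (Prod.le_def.1 hab).2, le_refl _⟩
      rw [← List.cons_head_tail (ys_ne hab ha), hyt] at hbm
      have := List.mem_singleton.1 hbm
      rw [this, slist_head (mem_hananV.1 ha).2 (Prod.le_def.1 hab).2]
    have heq : stair P a b = (slist (Xs P) a.1 b.1).map (fun x => ((x, a.2) : Point)) := by
      simp only [stair, hyt]; simp
    rw [List.getLast_congr _ (by simp [List.map_eq_nil_iff, xs_ne hab ha]) heq, List.getLast_map,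
      slist_last (mem_hananV.1 ha).1 (mem_hananV.1 hb).1 (Prod.le_def.1 hab).1, hy2]
  · have hmne : ((slist (Ys P) a.2 b.2).tail).map (fun y => ((b.1, y) : Point)) ≠ [] := by
      intro hcon
      apply hyt
      have hlen0 := congrArg List.length hcon
      rw [List.length_map] at hlen0
      exact List.length_eq_zero_iff.1 hlen0
    simp only [stair]
    rw [List.getLast_append _, dif_neg (by simp only [List.isEmpty_iff]; exact hmne),
      List.getLast_map, tail_getLast (ys_ne hab ha) hyt,
      slist_last (mem_hananV.1 ha).2 (mem_hananV.1 hb).2 (Prod.le_def.1 hab).2]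

lemma stair_mem {P : Inst} {a b : Point} (hab : a ≤ b) (ha : a ∈ hananV P)
    (hb : b ∈ hananV P) {z : Point} (hz : z ∈ stair P a b) :
    z ∈ hananV P ∧ a ≤ z ∧ z ≤ b := by
  rw [stair, List.mem_append] at hz
  rcases hz with hz | hz
  · obtain ⟨x, hx, rfl⟩ := List.mem_map.1 hz
    obtain ⟨hx1, hx2, hx3⟩ := mem_slist.1 hx
    exact ⟨mem_hananV.2 ⟨hx1, (mem_hananV.1 ha).2⟩,
      Prod.le_def.2 ⟨hx2, le_refl _⟩, Prod.le_def.2 ⟨hx3, (Prod.le_def.1 hab).2⟩⟩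
  · obtain ⟨y, hy, rfl⟩ := List.mem_map.1 hz
    obtain ⟨hy1, hy2, hy3⟩ := mem_slist.1 (List.mem_of_mem_tail hy)
    exact ⟨mem_hananV.2 ⟨(mem_hananV.1 hb).1, hy1⟩,
      Prod.le_def.2 ⟨(Prod.le_def.1 hab).1, hy2⟩, Prod.le_def.2 ⟨le_refl _, hy3⟩⟩

lemma stair_nodup {P : Inst} {a b : Point} (hab : a ≤ b) (ha : a ∈ hananV P) :
    (stair P a b).Nodup := by
  apply List.Nodup.append
  · exact List.Nodup.map (fun x y h => congrArg Prod.fst h) (slist_nodup _ _ _)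
  · exact List.Nodup.map (fun x y h => congrArg Prod.snd h) (slist_nodup _ _ _).tail
  · rw [List.disjoint_left]
    rintro z hz1 hz2
    obtain ⟨x, hx, rfl⟩ := List.mem_map.1 hz1
    obtain ⟨y, hy, hzy⟩ := List.mem_map.1 hz2
    have hy2 : y = a.2 := (congrArg Prod.snd hzy)
    have hhead : a.2 ∉ (slist (Ys P) a.2 b.2).tail := by
      have hnd := slist_nodup (Ys P) a.2 b.2
      conv at hnd => rw [← List.cons_head_tail (ys_ne hab ha)]
      rw [slist_head (mem_hananV.1 ha).2 (Prod.le_def.1 hab).2] at hnd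
      exact (List.nodup_cons.1 hnd).1
    rw [hy2] at hy
    exact hhead hy

lemma stair_length (P : Inst) (a b : Point) : (stair P a b).length =
    (slist (Xs P) a.1 b.1).length + ((slist (Ys P) a.2 b.2).length - 1) := by
  simp [stair]

lemma stair_chain {P : Inst} {a b : Point} (hab : a ≤ b) (ha : a ∈ hananV P)
    (hb : b ∈ hananV P) : List.IsChain (Rel P) (stair P a b) := by
  rw [List.isChain_iff_getElem]
  intro i hi
  have hlen : (stair P a b).length =
      (slist (Xs P) a.1 b.1).length + ((slist (Ys P) a.2 b.2).length - 1) := stair_length P a b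
  have hylen : 0 < (slist (Ys P) a.2 b.2).length := List.length_pos_iff.2 (ys_ne hab ha)
  have hxlen : 0 < (slist (Xs P) a.1 b.1).length := List.length_pos_iff.2 (xs_ne hab ha)
  have hi' : i + 1 < (slist (Xs P) a.1 b.1).length + ((slist (Ys P) a.2 b.2).length - 1) := by
    omega
  have hgetL : ∀ (j : ℕ) (hj : j < (slist (Xs P) a.1 b.1).length)
      (hj2 : j < (stair P a b).length),
      (stair P a b)[j] = ((slist (Xs P) a.1 b.1)[j], a.2) := by
    intro j hj hj2
    simp only [stair]
    rw [List.getElem_append, dif_pos (by simpa using hj)]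
    simp
  have hgetR : ∀ (j : ℕ) (hj : (slist (Xs P) a.1 b.1).length ≤ j)
      (hj2 : j < (slist (Xs P) a.1 b.1).length + ((slist (Ys P) a.2 b.2).length - 1)),
      (stair P a b)[j]'(by omega) =
        (b.1, (slist (Ys P) a.2 b.2)[j - (slist (Xs P) a.1 b.1).length + 1]'(by omega)) := by
    intro j hj hj2
    simp only [stair]
    rw [List.getElem_append, dif_neg (by simpa using by omega)]
    simp only [List.getElem_map, List.length_map, List.getElem_tail]
  by_cases hc : i + 1 < (slist (Xs P) a.1 b.1).length
  · rw [hgetL i (by omega) (by omega), hgetL (i+1) hc (by omega)]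
    exact horiz_edge P (mem_hananV.1 ha).2 (by omega)
  · have hbnd : i + 1 - (slist (Xs P) a.1 b.1).length + 1 < (slist (Ys P) a.2 b.2).length := by
      omega
    have hR : (stair P a b)[i+1]'(by omega) =
        (b.1, (slist (Ys P) a.2 b.2)[i + 1 - (slist (Xs P) a.1 b.1).length + 1]'(by omega)) :=
      hgetR (i+1) (by omega) (by omega)
    have hL : (stair P a b)[i]'(by omega) =
        (b.1, (slist (Ys P) a.2 b.2)[i + 1 - (slist (Xs P) a.1 b.1).length]'(by omega)) := by
      by_cases hc2 : i < (slist (Xs P) a.1 b.1).length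
      · have hieq : i + 1 = (slist (Xs P) a.1 b.1).length := by omega
        rw [hgetL i hc2 (by omega)]
        have hxlast : (slist (Xs P) a.1 b.1)[i]'(by omega) = b.1 := by
          have hll := slist_last (mem_hananV.1 ha).1 (mem_hananV.1 hb).1 (Prod.le_def.1 hab).1
          rw [List.getLast_eq_getElem] at hll
          rw [getElem_idx (show i = (slist (Xs P) a.1 b.1).length - 1 by omega), hll]
        have hh := slist_head (mem_hananV.1 ha).2 (Prod.le_def.1 hab).2
        rw [List.head_eq_getElem] at hh
        refine Prod.ext hxlast ?_
        exact hh.symm.trans (getElem_idx (by omega) (by omega))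
      · rw [hgetR i (by omega) (by omega)]
        exact congrArg (fun y => ((b.1, y) : Point)) (getElem_idx (by omega) (by omega))
    rw [hL, hR]
    exact vert_edge P (mem_hananV.1 hb).1 hbnd

end RegExt
namespace RegExt

lemma chain'_head_rel {α : Type*} {R : α → α → Prop} {l : List α} (h : List.IsChain R l)
    (hne : l ≠ []) (ht : l.tail ≠ []) : R (l.head hne) (l.tail.head ht) := by
  obtain ⟨a, l', rfl⟩ := List.exists_cons_of_ne_nil hne
  obtain ⟨b, l'', rfl⟩ := List.exists_cons_of_ne_nil ht
  exact (List.isChain_cons_cons.1 h).1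

lemma tail_eq_nil_getLast {α : Type*} {l : List α} (hne : l ≠ []) (ht : l.tail = []) :
    l.getLast hne = l.head hne := by
  obtain ⟨a, l', rfl⟩ := List.exists_cons_of_ne_nil hne
  have : l' = [] := ht
  subst this
  rfl

lemma glue_getLast {α : Type*} {l₁ l₂ : List α} (h₁ : l₁ ≠ []) (h₂ : l₂ ≠ [])
    (hglue : l₁.getLast h₁ = l₂.head h₂) (h : l₁ ++ l₂.tail ≠ []) :
    (l₁ ++ l₂.tail).getLast h = l₂.getLast h₂ := by
  by_cases ht : l₂.tail = []
  · rw [List.getLast_congr _ h₁ (by rw [ht, List.append_nil]), hglue,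
      tail_eq_nil_getLast h₂ ht]
  · rw [List.getLast_append _, dif_neg (by simp only [List.isEmpty_iff]; exact ht),
      tail_getLast h₂ ht]

lemma glue_head {α : Type*} {l₁ l₂ : List α} (h₁ : l₁ ≠ []) (h : l₁ ++ l₂ ≠ []) :
    (l₁ ++ l₂).head h = l₁.head h₁ := by
  rw [List.head_append, dif_neg (by simp only [List.isEmpty_iff]; exact h₁)]

lemma glue_chain' {α : Type*} {R : α → α → Prop} {l₁ l₂ : List α}
    (h₁ : List.IsChain R l₁) (h₂ : List.IsChain R l₂)
    (hne₁ : l₁ ≠ []) (hne₂ : l₂ ≠ []) (hglue : l₁.getLast hne₁ = l₂.head hne₂) :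
    List.IsChain R (l₁ ++ l₂.tail) := by
  rw [List.isChain_append]
  refine ⟨h₁, h₂.tail, ?_⟩
  intro x hx y hy
  by_cases ht : l₂.tail = []
  · rw [ht] at hy; simp at hy
  · rw [List.getLast?_eq_getLast hne₁, Option.mem_some_iff] at hx
    rw [List.head?_eq_head ht, Option.mem_some_iff] at hy
    rw [← hx, ← hy, hglue]
    exact chain'_head_rel h₂ hne₂ ht

end RegExt
/-- Key step of Lemma 3.1(1): for a regular pair `l ∈ P` and grid vertices `p ≤ q` in `B(l)`,
every M-path for `(p, q)` on the Hanan grid is completely contained in some M-path for `l`. -/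
theorem regular_extension (P : Inst) (l : Point × Point) (hl : l ∈ P)
    (hreg : Regular l) (p q : Point)
    (hp : p ∈ hananV P) (hq : q ∈ hananV P)
    (hpB : inBox l.1 l.2 p) (hqB : inBox l.1 l.2 q) (hpq : p ≤ q)
    (πv : GPath) (hπv : InPi P (p, q) πv) :
    ∃ πl : GPath, InPi P l πl ∧ πv.edges ⊆ πl.edges := by
  classical
  obtain ⟨hM, hG⟩ := hπv
  have hM' : IsMPath p q πv := hM
  have hl12 : l.1 ≤ l.2 := Prod.le_def.2 ⟨hreg.1, hreg.2⟩
  obtain ⟨h1p, hp2⟩ := RegExt.inBox_le hl12 hpB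
  obtain ⟨h1q, hq2⟩ := RegExt.inBox_le hl12 hqB
  have hl1V : l.1 ∈ hananV P := RegExt.mem_hananV.2
    ⟨Finset.mem_union_left _ (Finset.mem_image_of_mem _ hl),
     Finset.mem_union_left _ (Finset.mem_image_of_mem _ hl)⟩
  have hl2V : l.2 ∈ hananV P := RegExt.mem_hananV.2
    ⟨Finset.mem_union_right _ (Finset.mem_image_of_mem _ hl),
     Finset.mem_union_right _ (Finset.mem_image_of_mem _ hl)⟩
  -- the three pieces
  have hAne : RegExt.stair P l.1 p ≠ [] := RegExt.stair_ne h1p hl1V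
  have hCne : RegExt.stair P q l.2 ≠ [] := RegExt.stair_ne hq2 hq
  have hAhead := RegExt.stair_head h1p hl1V
  have hAlast := RegExt.stair_last h1p hl1V hp
  have hChead := RegExt.stair_head hq2 hq
  have hClast := RegExt.stair_last hq2 hq hl2V
  have hAchain := RegExt.stair_chain h1p hl1V hp
  have hCchain := RegExt.stair_chain hq2 hq hl2V
  have hAnodup := RegExt.stair_nodup h1p hl1V
  have hCnodup := RegExt.stair_nodup hq2 hq
  have hAmem : ∀ z ∈ RegExt.stair P l.1 p, z ≤ p :=
    fun z hz => (RegExt.stair_mem h1p hl1V hp hz).2.2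
  have hCmem : ∀ z ∈ RegExt.stair P q l.2, q ≤ z :=
    fun z hz => (RegExt.stair_mem hq2 hq hl2V hz).2.1
  -- facts about V = ofFn πv.pts
  have hVlen : (List.ofFn πv.pts).length = πv.k + 1 := List.length_ofFn
  have hVne : List.ofFn πv.pts ≠ [] := by
    intro h
    rw [h] at hVlen
    simp at hVlen
  have hVget : ∀ (j : ℕ) (hj : j < πv.k + 1),
      (List.ofFn πv.pts)[j]'(by rw [List.length_ofFn]; exact hj) = πv.pts ⟨j, hj⟩ := by
    intro j hj
    exact List.getElem_ofFn (by rw [List.length_ofFn]; exact hj)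
  have hVhead : (List.ofFn πv.pts).head hVne = p := by
    rw [List.head_eq_getElem, hVget 0 (by omega)]
    have e : (⟨0, by omega⟩ : Fin (πv.k + 1)) = 0 := Fin.ext (by simp)
    rw [e]
    exact hM'.1
  have hVlast : (List.ofFn πv.pts).getLast hVne = q := by
    rw [List.getLast_eq_getElem,
      RegExt.getElem_idx (show (List.ofFn πv.pts).length - 1 = πv.k by rw [hVlen]; omega),
      hVget πv.k (by omega)]
    have e : (⟨πv.k, by omega⟩ : Fin (πv.k + 1)) = Fin.last πv.k := Fin.ext (by simp)
    rw [e]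
    exact hM'.2.1
  have hVnodup : (List.ofFn πv.pts).Nodup := List.nodup_ofFn.2 πv.inj
  have hVmem : ∀ z ∈ List.ofFn πv.pts, p ≤ z ∧ z ≤ q := by
    intro z hz
    obtain ⟨i, rfl⟩ := List.mem_ofFn.1 hz
    exact RegExt.mpath_box hM' hpq i
  have hVchain : List.IsChain (RegExt.Rel P) (List.ofFn πv.pts) := by
    rw [List.isChain_iff_getElem]
    intro i hi
    rw [hVlen] at hi
    have hik : i < πv.k := by omega
    rw [hVget i (by omega), hVget (i+1) (by omega)]
    exact ⟨hG ⟨i, hik⟩, RegExt.mpath_steps hM' hpq ⟨i, hik⟩⟩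
  have hpnotV : p ∉ (List.ofFn πv.pts).tail := by
    have h2 := hVnodup
    rw [← List.cons_head_tail hVne, hVhead] at h2
    exact (List.nodup_cons.1 h2).1
  have hqnotC : q ∉ (RegExt.stair P q l.2).tail := by
    have h2 := hCnodup
    rw [← List.cons_head_tail hCne, hChead] at h2
    exact (List.nodup_cons.1 h2).1
  -- glue A with V
  have hAVne : RegExt.stair P l.1 p ++ (List.ofFn πv.pts).tail ≠ [] := by
    intro h
    exact hAne (List.append_eq_nil_iff.1 h).1
  have hAVlast : (RegExt.stair P l.1 p ++ (List.ofFn πv.pts).tail).getLast hAVne = q :=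
    (RegExt.glue_getLast hAne hVne (by rw [hAlast, hVhead]) hAVne).trans hVlast
  have hAVchain : List.IsChain (RegExt.Rel P)
      (RegExt.stair P l.1 p ++ (List.ofFn πv.pts).tail) :=
    RegExt.glue_chain' hAchain hVchain hAne hVne (by rw [hAlast, hVhead])
  have hAVhead : (RegExt.stair P l.1 p ++ (List.ofFn πv.pts).tail).head hAVne = l.1 :=
    (RegExt.glue_head hAne hAVne).trans hAhead
  -- the full list
  have hLne : (RegExt.stair P l.1 p ++ (List.ofFn πv.pts).tail) ++
      (RegExt.stair P q l.2).tail ≠ [] := by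
    intro h
    exact hAVne (List.append_eq_nil_iff.1 h).1
  have hLlast : ((RegExt.stair P l.1 p ++ (List.ofFn πv.pts).tail) ++
      (RegExt.stair P q l.2).tail).getLast hLne = l.2 :=
    (RegExt.glue_getLast hAVne hCne (by rw [hAVlast, hChead]) hLne).trans hClast
  have hLhead : ((RegExt.stair P l.1 p ++ (List.ofFn πv.pts).tail) ++
      (RegExt.stair P q l.2).tail).head hLne = l.1 :=
    (RegExt.glue_head hAVne hLne).trans hAVhead
  have hLchain : List.IsChain (RegExt.Rel P)
      ((RegExt.stair P l.1 p ++ (List.ofFn πv.pts).tail) ++ (RegExt.stair P q l.2).tail) :=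
    RegExt.glue_chain' hAVchain hCchain hAVne hCne (by rw [hAVlast, hChead])
  have hLnodup : ((RegExt.stair P l.1 p ++ (List.ofFn πv.pts).tail) ++
      (RegExt.stair P q l.2).tail).Nodup := by
    apply List.Nodup.append
    · apply List.Nodup.append hAnodup hVnodup.tail
      rw [List.disjoint_left]
      intro z hzA hzV
      have h1 := hAmem z hzA
      have h2 := (hVmem z (List.mem_of_mem_tail hzV)).1
      have hzp : z = p := le_antisymm h1 h2
      rw [hzp] at hzV
      exact hpnotV hzV
    · exact hCnodup.tail
    · rw [List.disjoint_left]
      intro z hz hzC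
      have hqz : q ≤ z := hCmem z (List.mem_of_mem_tail hzC)
      have hzq : z ≤ q := by
        rcases List.mem_append.1 hz with hz | hz
        · exact le_trans (hAmem z hz) hpq
        · exact (hVmem z (List.mem_of_mem_tail hz)).2
      have hzeq : z = q := le_antisymm hzq hqz
      rw [hzeq] at hzC
      exact hqnotC hzC
  refine ⟨RegExt.ofList _ hLne hLnodup, ?_, ?_⟩
  · have hIn := RegExt.inPi_ofList hLne hLnodup hLchain
    rw [hLhead, hLlast] at hIn
    exact hIn
  · -- edge containment
    intro e he
    obtain ⟨i, -, rfl⟩ := Finset.mem_image.1 he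
    have hApos : 0 < (RegExt.stair P l.1 p).length := List.length_pos_iff.2 hAne
    have hVtlen : (List.ofFn πv.pts).tail.length = πv.k := by
      rw [List.length_tail, hVlen]; omega
    have hLlen : ((RegExt.stair P l.1 p ++ (List.ofFn πv.pts).tail) ++
        (RegExt.stair P q l.2).tail).length =
        (RegExt.stair P l.1 p).length + πv.k + (RegExt.stair P q l.2).tail.length := by
      simp [List.length_append, hVtlen]; omega
    have key : ∀ (m : ℕ) (hm : m < πv.k + 1),
        ((RegExt.stair P l.1 p ++ (List.ofFn πv.pts).tail) ++
          (RegExt.stair P q l.2).tail)[(RegExt.stair P l.1 p).length - 1 + m]'(by omega) =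
        πv.pts ⟨m, hm⟩ := by
      intro m hm
      match m with
      | 0 =>
        rw [List.getElem_append, dif_pos (by
          rw [List.length_append]
          omega)]
        rw [List.getElem_append, dif_pos (by omega)]
        rw [RegExt.getElem_idx (show (RegExt.stair P l.1 p).length - 1 + 0 =
          (RegExt.stair P l.1 p).length - 1 by omega)]
        rw [← List.getLast_eq_getElem hAne, hAlast]
        have e : (⟨0, hm⟩ : Fin (πv.k + 1)) = 0 := Fin.ext (by simp)
        rw [e]
        exact hM'.1.symm
      | Nat.succ n =>
        rw [List.getElem_append, dif_pos (by
          rw [List.length_append]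
          omega)]
        rw [List.getElem_append, dif_neg (by omega)]
        rw [List.getElem_tail]
        rw [RegExt.getElem_idx (show (RegExt.stair P l.1 p).length - 1 + (n + 1) -
          (RegExt.stair P l.1 p).length + 1 = n + 1 by omega)]
        exact hVget (n + 1) hm
    have hik := i.isLt
    have hj : (RegExt.stair P l.1 p).length - 1 + i.val <
        (RegExt.ofList _ hLne hLnodup).k := by
      show _ < ((RegExt.stair P l.1 p ++ (List.ofFn πv.pts).tail) ++
        (RegExt.stair P q l.2).tail).length - 1
      omega
    have e1 : (RegExt.ofList _ hLne hLnodup).pts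
        (Fin.castSucc ⟨(RegExt.stair P l.1 p).length - 1 + i.val, hj⟩) = πv.pts i.castSucc := by
      have h := key i.val (by omega)
      have hcast : πv.pts (⟨i.val, by omega⟩ : Fin (πv.k + 1)) = πv.pts i.castSucc :=
        congrArg πv.pts (Fin.ext (by simp))
      rw [← hcast]
      exact h
    have e2 : (RegExt.ofList _ hLne hLnodup).pts
        (Fin.succ ⟨(RegExt.stair P l.1 p).length - 1 + i.val, hj⟩) = πv.pts i.succ := by
      have h := key (i.val + 1) (by omega)
      have hcast : πv.pts (⟨i.val + 1, by omega⟩ : Fin (πv.k + 1)) = πv.pts i.succ :=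
        congrArg πv.pts (Fin.ext (by simp))
      rw [← hcast]
      exact h
    have hedge : (RegExt.ofList _ hLne hLnodup).edge
        ⟨(RegExt.stair P l.1 p).length - 1 + i.val, hj⟩ = πv.edge i := by
      unfold GPath.edge
      rw [e1, e2]
    exact Finset.mem_image.2 ⟨_, Finset.mem_univ _, hedge⟩

end
end

section
/- Let P be a GMMN instance, let l = (s_l, t_l) ∈ P be a flipped pair, and let p and q be vertices of the Hanan grid H(P) lying in B(l) with p ≤ q, p_x < q_x and p_y < q_y. Then no Manhattan path π_l ∈ Π_P(l) contains both a horizontal edge and a vertical edge of any single Manhattan path π_v ∈ Π_P(p,q). (This is the key upper-bound step in the proof of Lemma 3.1(2).) -/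
noncomputable section
open scoped Classical

lemma euclen_eq_of_axis {a b : Point} (h : axisAligned a b) :
    euclen a b = |a.1 - b.1| + |a.2 - b.2| := by
  unfold euclen
  rcases h with h | h <;> rw [h] <;> simp [Real.sqrt_sq_eq_abs]

lemma telescope_fin {k : ℕ} (f : Fin (k+1) → ℝ) :
    ∑ i : Fin k, (f i.succ - f i.castSucc) = f (Fin.last k) - f 0 := by
  set F : ℕ → ℝ := fun n => f ⟨min n k, by omega⟩ with hF
  have key : ∀ i : Fin k, f i.succ - f i.castSucc = F (i.val+1) - F i.val := by
    intro i
    have hi := i.isLt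
    have e1 : F i.val = f i.castSucc := by
      show f _ = f _; congr 1; ext; simp only [Fin.val_mk, Fin.coe_castSucc, Fin.val_succ]; omega
    have e2 : F (i.val+1) = f i.succ := by
      show f _ = f _; congr 1; ext; simp only [Fin.val_mk, Fin.coe_castSucc, Fin.val_succ]; omega
    rw [e1, e2]
  rw [Finset.sum_congr rfl (fun i _ => key i)]
  rw [Fin.sum_univ_eq_sum_range (fun n => F (n+1) - F n) k]
  rw [Finset.sum_range_sub F]
  congr 1 <;> (show f _ = f _ ; congr 1; ext; simp)

lemma steps_nonneg {k : ℕ} {d : Fin k → ℝ}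
    (h : ∑ i, |d i| = ∑ i, d i) : ∀ i, 0 ≤ d i := by
  have h0 : ∑ i : Fin k, (|d i| - d i) = 0 := by
    rw [Finset.sum_sub_distrib, h]; ring
  intro i
  have := (Finset.sum_eq_zero_iff_of_nonneg
    (fun j _ => sub_nonneg.mpr (le_abs_self (d j)))).mp h0 i (Finset.mem_univ i)
  have := abs_nonneg (d i)
  linarith [sub_eq_zero.mp ‹|d i| - d i = 0›]

lemma mono_of_steps {k : ℕ} {f : Fin (k+1) → ℝ}
    (h : ∀ i : Fin k, f i.castSucc ≤ f i.succ) {i j : Fin (k+1)} (hij : i ≤ j) :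
    f i ≤ f j := by
  set F : ℕ → ℝ := fun n => f ⟨min n k, by omega⟩ with hF
  have mono : Monotone F := monotone_nat_of_le_succ (by
    intro n
    by_cases hn : n < k
    · have e1 : F n = f ((⟨n, hn⟩ : Fin k).castSucc) := by
        show f _ = f _; congr 1; ext; simp only [Fin.val_mk, Fin.coe_castSucc, Fin.val_succ]; omega
      have e2 : F (n+1) = f ((⟨n, hn⟩ : Fin k).succ) := by
        show f _ = f _; congr 1; ext; simp only [Fin.val_mk, Fin.coe_castSucc, Fin.val_succ]; omega
      rw [e1, e2]; exact h ⟨n, hn⟩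
    · have : min n k = min (n+1) k := by omega
      show f _ ≤ f _
      rw [show (⟨min n k, by omega⟩ : Fin (k+1)) = ⟨min (n+1) k, by omega⟩ by ext; simp [this]])
  have hi := i.isLt
  have hj := j.isLt
  have g1 : F i.val = f i := by show f _ = f _; congr 1; ext; simp only [Fin.val_mk, Fin.coe_castSucc, Fin.val_succ]; omega
  have g2 : F j.val = f j := by show f _ = f _; congr 1; ext; simp only [Fin.val_mk, Fin.coe_castSucc, Fin.val_succ]; omega
  calc f i = F i.val := g1.symm
    _ ≤ F j.val := mono hij
    _ = f j := g2


lemma mpath_sum_abs {s t : Point} {π : GPath} (h : IsMPath s t π) :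
    (∑ i : Fin π.k, |(π.pts i.succ).1 - (π.pts i.castSucc).1|) = |t.1 - s.1| ∧
    (∑ i : Fin π.k, |(π.pts i.succ).2 - (π.pts i.castSucc).2|) = |t.2 - s.2| := by
  obtain ⟨hs, ht, hax, hlen⟩ := h
  have hlen' : π.length = (∑ i : Fin π.k, |(π.pts i.succ).1 - (π.pts i.castSucc).1|)
      + (∑ i : Fin π.k, |(π.pts i.succ).2 - (π.pts i.castSucc).2|) := by
    rw [← Finset.sum_add_distrib]
    refine Finset.sum_congr rfl fun i _ => ?_
    rw [euclen_eq_of_axis (hax i), abs_sub_comm, abs_sub_comm (π.pts i.castSucc).2]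
  have tx := telescope_fin (fun v => (π.pts v).1)
  have ty := telescope_fin (fun v => (π.pts v).2)
  simp only [hs, ht] at tx ty
  have bx : |t.1 - s.1| ≤ ∑ i : Fin π.k, |(π.pts i.succ).1 - (π.pts i.castSucc).1| := by
    rw [← tx]; exact Finset.abs_sum_le_sum_abs _ _
  have by' : |t.2 - s.2| ≤ ∑ i : Fin π.k, |(π.pts i.succ).2 - (π.pts i.castSucc).2| := by
    rw [← ty]; exact Finset.abs_sum_le_sum_abs _ _
  have hm : manh s t = |t.1 - s.1| + |t.2 - s.2| := by
    unfold manh; rw [abs_sub_comm, abs_sub_comm s.2]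
  rw [hlen', hm] at hlen
  constructor <;> linarith

lemma mpath_x_step {s t : Point} {π : GPath} (h : IsMPath s t π) (hst : s.1 ≤ t.1) :
    ∀ i : Fin π.k, (π.pts i.castSucc).1 ≤ (π.pts i.succ).1 := by
  have hsum := (mpath_sum_abs h).1
  have tx := telescope_fin (fun v => (π.pts v).1)
  simp only [h.1, h.2.1] at tx
  have : (∑ i : Fin π.k, |(π.pts i.succ).1 - (π.pts i.castSucc).1|)
      = ∑ i : Fin π.k, ((π.pts i.succ).1 - (π.pts i.castSucc).1) := by
    rw [hsum, tx, abs_of_nonneg (by linarith)]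
  intro i
  linarith [steps_nonneg this i]

lemma mpath_y_step {s t : Point} {π : GPath} (h : IsMPath s t π) (hst : s.2 ≤ t.2) :
    ∀ i : Fin π.k, (π.pts i.castSucc).2 ≤ (π.pts i.succ).2 := by
  have hsum := (mpath_sum_abs h).2
  have ty := telescope_fin (fun v => (π.pts v).2)
  simp only [h.1, h.2.1] at ty
  have : (∑ i : Fin π.k, |(π.pts i.succ).2 - (π.pts i.castSucc).2|)
      = ∑ i : Fin π.k, ((π.pts i.succ).2 - (π.pts i.castSucc).2) := by
    rw [hsum, ty, abs_of_nonneg (by linarith)]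
  intro i
  linarith [steps_nonneg this i]

lemma mpath_y_antistep {s t : Point} {π : GPath} (h : IsMPath s t π) (hst : t.2 ≤ s.2) :
    ∀ i : Fin π.k, (π.pts i.succ).2 ≤ (π.pts i.castSucc).2 := by
  have hsum := (mpath_sum_abs h).2
  have ty := telescope_fin (fun v => (π.pts v).2)
  simp only [h.1, h.2.1] at ty
  have : (∑ i : Fin π.k, |-((π.pts i.succ).2 - (π.pts i.castSucc).2)|)
      = ∑ i : Fin π.k, (-((π.pts i.succ).2 - (π.pts i.castSucc).2)) := by
    simp only [abs_neg]
    rw [hsum, Finset.sum_neg_distrib, ty, abs_of_nonpos (by linarith)]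
  intro i
  linarith [steps_nonneg this i]

lemma mem_edges_iff {π : GPath} {e : Sym2 Point} (h : e ∈ π.edges) :
    ∃ i : Fin π.k, s(π.pts i.castSucc, π.pts i.succ) = e := by
  rcases Finset.mem_image.mp h with ⟨i, _, hi⟩; exact ⟨i, hi⟩

/-- Key step of Lemma 3.1(2): for a flipped pair `l ∈ P` and grid vertices `p ≤ q` in `B(l)`
with `p_x < q_x` and `p_y < q_y`, no M-path for `l` contains both a horizontal edge and a
vertical edge of a single M-path for `(p, q)`. -/
theorem flipped_no_both_directions (P : Inst) (l : Point × Point) (hl : l ∈ P)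
    (hfl : Flipped l) (p q : Point)
    (hp : p ∈ hananV P) (hq : q ∈ hananV P)
    (hpB : inBox l.1 l.2 p) (hqB : inBox l.1 l.2 q)
    (hx : p.1 < q.1) (hy : p.2 < q.2)
    (πl πv : GPath) (hπl : InPi P l πl) (hπv : InPi P (p, q) πv) :
    ¬ ∃ e₁ e₂ : Sym2 Point,
        e₁ ∈ πv.edges ∧ e₁ ∈ πl.edges ∧ e₂ ∈ πv.edges ∧ e₂ ∈ πl.edges ∧
        (∃ z w : Point, e₁ = s(z, w) ∧ z.2 = w.2) ∧
        (∃ z w : Point, e₂ = s(z, w) ∧ z.1 = w.1) := by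
  rintro ⟨e₁, e₂, hv1, hl1, hv2, hl2, ⟨z, w, he1, hzw⟩, ⟨z', w', he2, hzw'⟩⟩
  obtain ⟨i, hi⟩ := mem_edges_iff hv1
  obtain ⟨a, ha⟩ := mem_edges_iff hl1
  obtain ⟨j, hj⟩ := mem_edges_iff hv2
  obtain ⟨b, hb⟩ := mem_edges_iff hl2
  -- step monotonicities
  have hvx := mpath_x_step hπv.1 hx.le
  have hvy := mpath_y_step hπv.1 hy.le
  have hlx := mpath_x_step hπl.1 hfl.1
  have hly := mpath_y_antistep hπl.1 hfl.2
  -- the e₁ edge of πv is horizontal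
  have hABy : (πv.pts i.castSucc).2 = (πv.pts i.succ).2 := by
    rw [he1] at hi
    rcases Sym2.eq_iff.mp hi with ⟨h1, h2⟩ | ⟨h1, h2⟩ <;> rw [h1, h2]
    · exact hzw
    · exact hzw.symm
  -- the e₂ edge of πv is vertical
  have hCDx : (πv.pts j.castSucc).1 = (πv.pts j.succ).1 := by
    rw [he2] at hj
    rcases Sym2.eq_iff.mp hj with ⟨h1, h2⟩ | ⟨h1, h2⟩ <;> rw [h1, h2]
    · exact hzw'
    · exact hzw'.symm
  -- adjacent vertices of a path are distinct
  have hdist : ∀ (π : GPath) (i : Fin π.k), π.pts i.castSucc ≠ π.pts i.succ := by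
    intro π i h
    have := congrArg Fin.val (π.inj h)
    simp only [Fin.coe_castSucc, Fin.val_succ] at this
    omega
  have hABlt : (πv.pts i.castSucc).1 < (πv.pts i.succ).1 :=
    lt_of_le_of_ne (hvx i) fun h => hdist πv i (Prod.ext h hABy)
  have hCDlt : (πv.pts j.castSucc).2 < (πv.pts j.succ).2 :=
    lt_of_le_of_ne (hvy j) fun h => hdist πv j (Prod.ext hCDx h)
  -- identify e₁'s endpoints on πl
  have he1' : s(πl.pts a.castSucc, πl.pts a.succ) = s(πv.pts i.castSucc, πv.pts i.succ) := by
    rw [ha, ← hi]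
  have ha' : πl.pts a.castSucc = πv.pts i.castSucc ∧ πl.pts a.succ = πv.pts i.succ := by
    rcases Sym2.eq_iff.mp he1' with h' | ⟨h1, h2⟩
    · exact h'
    · exfalso
      have := hlx a
      rw [h1, h2] at this
      linarith
  -- identify e₂'s endpoints on πl (reversed)
  have he2' : s(πl.pts b.castSucc, πl.pts b.succ) = s(πv.pts j.castSucc, πv.pts j.succ) := by
    rw [hb, ← hj]
  have hb' : πl.pts b.castSucc = πv.pts j.succ ∧ πl.pts b.succ = πv.pts j.castSucc := by
    rcases Sym2.eq_iff.mp he2' with ⟨h1, h2⟩ | h'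
    · exfalso
      have := hly b
      rw [h1, h2] at this
      linarith
    · exact h'
  -- i ≠ j and a ≠ b
  have hij : i ≠ j := by
    intro h
    rw [← h] at hCDx
    exact absurd hCDx (ne_of_lt hABlt)
  have hab : a ≠ b := by
    intro h
    have e1 : πv.pts i.castSucc = πv.pts j.succ := by rw [← ha'.1, h, hb'.1]
    have e2 : πv.pts i.succ = πv.pts j.castSucc := by rw [← ha'.2, h, hb'.2]
    rw [← e1, ← e2] at hCDx
    linarith
  rcases lt_or_gt_of_ne hij with hij' | hij'
  · -- e₁ before e₂ on πv
    have h1 : (i.succ : Fin (πv.k + 1)) ≤ j.castSucc := by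
      rw [Fin.le_def]
      simp only [Fin.val_succ, Fin.coe_castSucc]
      exact hij'
    have hv1' : (πv.pts i.succ).1 ≤ (πv.pts j.castSucc).1 :=
      mono_of_steps (f := fun v => (πv.pts v).1) hvx h1
    have hv2' : (πv.pts i.succ).2 ≤ (πv.pts j.castSucc).2 :=
      mono_of_steps (f := fun v => (πv.pts v).2) hvy h1
    rcases lt_or_gt_of_ne hab with hab' | hab'
    · -- e₁ before e₂ on πl : y contradiction
      have h2 : (a.succ : Fin (πl.k + 1)) ≤ b.castSucc := by
        rw [Fin.le_def]
        simp only [Fin.val_succ, Fin.coe_castSucc]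
        exact hab'
      have hthis : -(πl.pts a.succ).2 ≤ -(πl.pts b.castSucc).2 :=
        mono_of_steps (f := fun v => -(πl.pts v).2) (fun i => neg_le_neg (hly i)) h2
      rw [ha'.2, hb'.1] at hthis
      linarith
    · -- e₂ before e₁ on πl : x contradiction
      have h2 : (b.succ : Fin (πl.k + 1)) ≤ a.castSucc := by
        rw [Fin.le_def]
        simp only [Fin.val_succ, Fin.coe_castSucc]
        exact hab'
      have hthis : (πl.pts b.succ).1 ≤ (πl.pts a.castSucc).1 :=
        mono_of_steps (f := fun v => (πl.pts v).1) hlx h2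
      rw [hb'.2, ha'.1] at hthis
      linarith
  · -- e₂ before e₁ on πv
    have h1 : (j.succ : Fin (πv.k + 1)) ≤ i.castSucc := by
      rw [Fin.le_def]
      simp only [Fin.val_succ, Fin.coe_castSucc]
      exact hij'
    have hv1' : (πv.pts j.succ).1 ≤ (πv.pts i.castSucc).1 :=
      mono_of_steps (f := fun v => (πv.pts v).1) hvx h1
    have hv2' : (πv.pts j.succ).2 ≤ (πv.pts i.castSucc).2 :=
      mono_of_steps (f := fun v => (πv.pts v).2) hvy h1
    rcases lt_or_gt_of_ne hab with hab' | hab'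
    · -- e₁ before e₂ on πl : x contradiction
      have h2 : (a.succ : Fin (πl.k + 1)) ≤ b.castSucc := by
        rw [Fin.le_def]
        simp only [Fin.val_succ, Fin.coe_castSucc]
        exact hab'
      have hthis : (πl.pts a.succ).1 ≤ (πl.pts b.castSucc).1 :=
        mono_of_steps (f := fun v => (πl.pts v).1) hlx h2
      rw [ha'.2, hb'.1] at hthis
      linarith
    · -- e₂ before e₁ on πl : y contradiction
      have h2 : (b.succ : Fin (πl.k + 1)) ≤ a.castSucc := by
        rw [Fin.le_def]
        simp only [Fin.val_succ, Fin.coe_castSucc]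
        exact hab'
      have hthis : -(πl.pts b.succ).2 ≤ -(πl.pts a.castSucc).2 :=
        mono_of_steps (f := fun v => -(πl.pts v).2) (fun i => neg_le_neg (hly i)) h2
      rw [hb'.2, ha'.1] at hthis
      linarith

end
end
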